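/- For nonnegative integer N, ν ∈ {0,1}, and any integer k, the generating function B_{2N+ν}(k,q) for partitions into distinct parts ≤ 2N+ν with BG-rank equal to k satisfies B_{2N+ν}(k,q) = q^{2k²−k} · [2N+ν choose N+k]_{q²}. -/

import Mathlib

def IsDistinctPartition (π : List ℕ) : Prop :=
  π.Chain' (· > ·) ∧ ∀ p ∈ π, 0 < p

def IsPartition (π : List ℕ) : Prop :=
  π.Chain' (· ≥ ·) ∧ ∀ p ∈ π, 0 < p

def oddIdxOdd (π : List ℕ) : ℕ :=
  (((List.range π.length).zip π).filter fun p => p.1 % 2 == 0 && p.2 % 2 == 1).length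

def evenIdxOdd (π : List ℕ) : ℕ :=
  (((List.range π.length).zip π).filter fun p => p.1 % 2 == 1 && p.2 % 2 == 1).length

def bgRank (π : List ℕ) : ℤ := (oddIdxOdd π : ℤ) - evenIdxOdd π

def altSum : List ℕ → ℤ
  | [] => 0
  | a :: t => (a : ℤ) - altSum t

noncomputable def gaussPoly : ℕ → ℕ → Polynomial ℚ
  | _, 0 => 1
  | 0, _ + 1 => 0
  | m + 1, r + 1 => gaussPoly m r + Polynomial.X ^ (r + 1) * gaussPoly m (r + 1)

noncomputable def gaussZ (m : ℕ) (r : ℤ) : Polynomial ℚ :=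
  if 0 ≤ r then gaussPoly m r.toNat else 0

section AuxA

lemma key0 : ∀ (t : List ℕ) (i : ℕ),
    (((List.range' i t.length).zip t).filter fun p => p.1 % 2 == 0 && p.2 % 2 == 1).length
      = (((List.range' (i+1) t.length).zip t).filter fun p => p.1 % 2 == 1 && p.2 % 2 == 1).length := by
  intro t
  induction t with
  | nil => intro i; simp
  | cons a t ih =>
    intro i
    simp only [List.length_cons, List.range'_succ, List.zip_cons_cons, List.filter_cons]
    have h : ((i % 2 == 0 && a % 2 == 1) = true) ↔ (((i+1) % 2 == 1 && a % 2 == 1) = true) := by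
      simp only [Bool.and_eq_true, beq_iff_eq]
      omega
    by_cases hc : (i % 2 == 0 && a % 2 == 1) = true
    · rw [if_pos hc, if_pos (h.mp hc)]
      simp [ih (i+1)]
    · rw [if_neg hc, if_neg (fun hx => hc (h.mpr hx))]
      exact ih (i+1)

lemma key1 : ∀ (t : List ℕ) (i : ℕ),
    (((List.range' i t.length).zip t).filter fun p => p.1 % 2 == 1 && p.2 % 2 == 1).length
      = (((List.range' (i+1) t.length).zip t).filter fun p => p.1 % 2 == 0 && p.2 % 2 == 1).length := by
  intro t
  induction t with
  | nil => intro i; simp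
  | cons a t ih =>
    intro i
    simp only [List.length_cons, List.range'_succ, List.zip_cons_cons, List.filter_cons]
    have h : ((i % 2 == 1 && a % 2 == 1) = true) ↔ (((i+1) % 2 == 0 && a % 2 == 1) = true) := by
      simp only [Bool.and_eq_true, beq_iff_eq]
      omega
    by_cases hc : (i % 2 == 1 && a % 2 == 1) = true
    · rw [if_pos hc, if_pos (h.mp hc)]
      simp [ih (i+1)]
    · rw [if_neg hc, if_neg (fun hx => hc (h.mpr hx))]
      exact ih (i+1)

lemma oddIdxOdd_cons (a : ℕ) (t : List ℕ) :
    oddIdxOdd (a :: t) = (if a % 2 = 1 then 1 else 0) + evenIdxOdd t := by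
  unfold oddIdxOdd evenIdxOdd
  have hk := (key1 t 0).symm
  simp only [Nat.zero_add] at hk
  simp only [List.range_eq_range', List.length_cons, List.range'_succ, List.zip_cons_cons, List.filter_cons]
  by_cases h : a % 2 = 1 <;> simp [h, hk, Nat.add_comm]

lemma evenIdxOdd_cons (a : ℕ) (t : List ℕ) :
    evenIdxOdd (a :: t) = oddIdxOdd t := by
  unfold oddIdxOdd evenIdxOdd
  have hk := (key0 t 0).symm
  simp only [Nat.zero_add] at hk
  simp only [List.range_eq_range', List.length_cons, List.range'_succ, List.zip_cons_cons, List.filter_cons]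
  simp [hk]

lemma bgRank_cons (a : ℕ) (t : List ℕ) :
    bgRank (a :: t) = (if a % 2 = 1 then 1 else 0) - bgRank t := by
  unfold bgRank
  rw [oddIdxOdd_cons, evenIdxOdd_cons]
  by_cases h : a % 2 = 1 <;> simp [h] <;> push_cast <;> ring

lemma bgRank_nil : bgRank [] = 0 := by simp [bgRank, oddIdxOdd, evenIdxOdd]

end AuxA

section AuxB
open Polynomial

lemma gauss_zero_r (m : ℕ) : gaussPoly m 0 = 1 := by cases m <;> rfl

lemma gauss_big : ∀ m r : ℕ, m < r → gaussPoly m r = 0 := by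
  intro m
  induction m with
  | zero =>
    intro r hr
    obtain ⟨s, rfl⟩ : ∃ s, r = s + 1 := ⟨r - 1, by omega⟩
    rfl
  | succ m ih =>
    intro r hr
    obtain ⟨s, rfl⟩ : ∃ s, r = s + 1 := ⟨r - 1, by omega⟩
    show gaussPoly m s + X ^ (s+1) * gaussPoly m (s+1) = 0
    rw [ih s (by omega), ih (s+1) (by omega)]
    ring

lemma gauss_self : ∀ m : ℕ, gaussPoly m m = 1 := by
  intro m
  induction m with
  | zero => rfl
  | succ m ih =>
    show gaussPoly m m + X ^ (m+1) * gaussPoly m (m+1) = 1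
    rw [ih, gauss_big m (m+1) (by omega)]
    ring

lemma gauss_one (m : ℕ) : gaussPoly m 1 = ∑ i ∈ Finset.range m, X ^ i := by
  induction m with
  | zero => simp [gaussPoly]
  | succ m ih =>
    show gaussPoly m 0 + X ^ 1 * gaussPoly m 1 = _
    rw [gauss_zero_r, ih, Finset.mul_sum, Finset.sum_range_succ']
    simp [← pow_succ']
    ring

lemma pascal2 : ∀ m r : ℕ, r ≤ m →
    gaussPoly (m+1) (r+1) = X ^ (m - r) * gaussPoly m r + gaussPoly m (r+1) := by
  intro m
  induction m with
  | zero =>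
    intro r hr
    interval_cases r
    show gaussPoly 0 0 + X ^ 1 * gaussPoly 0 1 = _
    simp [gauss_zero_r, gauss_big 0 1 (by omega)]
  | succ m ih =>
    intro r hr
    match r with
    | 0 =>
      show gaussPoly (m+1) 0 + X ^ 1 * gaussPoly (m+1) 1 = X ^ (m+1) * gaussPoly (m+1) 0 + gaussPoly (m+1) 1
      rw [gauss_zero_r, gauss_one]
      rw [Finset.mul_sum, Finset.sum_range_succ' (fun i => X ^ i) m, Finset.sum_range_succ]
      simp [← pow_succ']
      ring
    | s + 1 =>
      have hsm : s ≤ m := by omega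
      have step1 : gaussPoly (m+2) (s+2) = gaussPoly (m+1) (s+1) + X ^ (s+2) * gaussPoly (m+1) (s+2) := rfl
      have step2 : gaussPoly (m+1) (s+1) = gaussPoly m s + X ^ (s+1) * gaussPoly m (s+1) := rfl
      have step3 : gaussPoly (m+1) (s+2) = gaussPoly m (s+1) + X ^ (s+2) * gaussPoly m (s+2) := rfl
      have ihs := ih s hsm
      -- goal : gaussPoly (m+2) (s+2) = X ^ (m+1-(s+1)) * gaussPoly (m+1) (s+1) + gaussPoly (m+1) (s+2)
      have hexp : m + 1 - (s + 1) = m - s := by omega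
      rw [step1, hexp]
      by_cases hs1 : s + 1 ≤ m
      · have ihs1 := ih (s+1) hs1
        have hx : (X : Polynomial ℚ) ^ (m - (s+1)) * X ^ (s+2) = X ^ (m - s) * X ^ (s+1) := by
          rw [← pow_add, ← pow_add]
          congr 1
          omega
        linear_combination ihs + X ^ (s+2) * ihs1 - X ^ (m-s) * step2 - step3 + gaussPoly m (s+1) * hx
      · have hz : gaussPoly (m+1) (s+1+1) = 0 := gauss_big _ _ (by omega)
        rw [show s+1+1 = s+2 from rfl] at hz
        rw [hz, show m - s = 0 from by omega]
        simp

lemma gauss_symm : ∀ m r : ℕ, r ≤ m → gaussPoly m (m - r) = gaussPoly m r := by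
  intro m
  induction m with
  | zero => intro r hr; interval_cases r; rfl
  | succ m ih =>
    intro r hr
    match r with
    | 0 => simpa [gauss_zero_r] using gauss_self (m+1)
    | s + 1 =>
      have hsm : s ≤ m := by omega
      rcases Nat.eq_or_lt_of_le hr with he | hlt
      · rw [show m + 1 - (s+1) = 0 from by omega, gauss_zero_r, he, gauss_self]
      · -- s + 1 ≤ m, so m + 1 - (s+1) = (m - s - 1) + 1
        have hs1 : s + 1 ≤ m := by omega
        have ht : m + 1 - (s + 1) = (m - s - 1) + 1 := by omega
        rw [ht]
        have step : gaussPoly (m+1) ((m-s-1)+1) = gaussPoly m (m-s-1) + X ^ ((m-s-1)+1) * gaussPoly m ((m-s-1)+1) := rfl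
        rw [step, pascal2 m s hsm]
        have h1 : gaussPoly m (m - s - 1) = gaussPoly m (s+1) := by
          have := ih (s+1) hs1
          rwa [show m - (s+1) = m - s - 1 from by omega] at this
        have h2 : gaussPoly m ((m - s - 1) + 1) = gaussPoly m s := by
          have := ih s hsm
          rwa [show m - s = m - s - 1 + 1 from by omega] at this
        rw [h1, h2, show (m - s - 1) + 1 = m - s from by omega]
        ring

end AuxB

-- Section C: counting

abbrev bgS (M : ℕ) (k : ℤ) (n : ℕ) : Type :=
  {π : List ℕ // IsDistinctPartition π ∧ (∀ p ∈ π, p ≤ M) ∧ π.sum = n ∧ bgRank π = k}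

instance isAntisymmGtNat : IsAntisymm ℕ (· > ·) := ⟨fun _ _ h1 h2 => by omega⟩

lemma isdp_pairwise {π : List ℕ} (h : IsDistinctPartition π) : π.Pairwise (· > ·) :=
  List.isChain_iff_pairwise.mp h.1

instance bgS_finite (M : ℕ) (k : ℤ) (n : ℕ) : Finite (bgS M k n) := by
  have hinj : Function.Injective (fun x : bgS M k n =>
      (⟨(x.1 : Multiset ℕ), fun hi => x.2.1.2 _ hi, by simp [x.2.2.2.1]⟩ : Nat.Partition n)) := by
    intro a b hab
    have hp : a.1.Perm b.1 := Multiset.coe_eq_coe.mp (congrArg Nat.Partition.parts hab)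
    exact Subtype.ext (hp.eq_of_pairwise' (isdp_pairwise a.2.1) (isdp_pairwise b.2.1))
  exact Finite.of_injective _ hinj

noncomputable def cnt (M : ℕ) (k : ℤ) (n : ℕ) : ℕ := Nat.card (bgS M k n)

lemma cnt_zero (k : ℤ) (n : ℕ) : cnt 0 k n = if k = 0 ∧ n = 0 then 1 else 0 := by
  have hnil : ∀ π : List ℕ, IsDistinctPartition π → (∀ p ∈ π, p ≤ 0) → π = [] := by
    intro π hd hb
    cases π with
    | nil => rfl
    | cons a t => exact absurd (hb a (by simp)) (by have := hd.2 a (by simp); omega)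
  by_cases h : k = 0 ∧ n = 0
  · obtain ⟨rfl, rfl⟩ := h
    rw [if_pos ⟨rfl, rfl⟩]
    have : Unique (bgS 0 0 0) := by
      refine ⟨⟨⟨[], ⟨List.isChain_nil, by simp⟩, by simp, by simp, bgRank_nil⟩⟩, ?_⟩
      intro x
      exact Subtype.ext (hnil x.1 x.2.1 x.2.2.1)
    exact Nat.card_unique
  · rw [if_neg h]
    have : IsEmpty (bgS 0 k n) := by
      constructor
      intro x
      have hx := hnil x.1 x.2.1 x.2.2.1
      apply h
      have hs := x.2.2.2.1
      have hr := x.2.2.2.2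
      rw [hx] at hs hr
      simp at hs
      rw [bgRank_nil] at hr
      exact ⟨hr.symm, hs.symm⟩
    exact Nat.card_of_isEmpty

lemma mod2_cast (a : ℕ) : ((if a % 2 = 1 then 1 else 0 : ℤ)) = ((a % 2 : ℕ) : ℤ) := by
  rcases Nat.mod_two_eq_zero_or_one a with h | h <;> simp [h]

lemma eq_cons_of_mem {M : ℕ} {π : List ℕ} (hd : IsDistinctPartition π)
    (hm : (M+1) ∈ π) (hb : ∀ p ∈ π, p ≤ M+1) : π = (M+1) :: π.tail := by
  cases π with
  | nil => cases hm
  | cons a t =>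
    have hpw := isdp_pairwise hd
    rcases List.mem_cons.mp hm with h | h
    · rw [h]; rfl
    · have h1 : a > M + 1 := (List.pairwise_cons.mp hpw).1 _ h
      have h2 : a ≤ M + 1 := hb a (by simp)
      omega

def eqvNotMem (M : ℕ) (k : ℤ) (n : ℕ) :
    {x : bgS (M+1) k n // (M+1) ∉ x.1} ≃ bgS M k n where
  toFun x := ⟨x.1.1, x.1.2.1, fun p hp => by
      have h1 := x.1.2.2.1 p hp
      have h2 : p ≠ M+1 := fun he => x.2 (he ▸ hp)
      omega, x.1.2.2.2⟩
  invFun y := ⟨⟨y.1, y.2.1, fun p hp => le_trans (y.2.2.1 p hp) (by omega), y.2.2.2⟩,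
      fun hm => by have := y.2.2.1 _ hm; omega⟩
  left_inv x := rfl
  right_inv y := rfl

def eqvMem (M : ℕ) (k : ℤ) (n : ℕ) (h : M + 1 ≤ n) :
    {x : bgS (M+1) k n // (M+1) ∈ x.1} ≃ bgS M ((((M+1) % 2 : ℕ) : ℤ) - k) (n - (M+1)) where
  toFun x := by
    refine ⟨x.1.1.tail, ⟨?_, ?_⟩, ?_, ?_, ?_⟩
    · have hc : List.Chain' (· > ·) ((M+1) :: x.1.1.tail) :=
        (eq_cons_of_mem x.1.2.1 x.2 x.1.2.2.1) ▸ x.1.2.1.1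
      exact hc.tail
    · intro p hp
      exact x.1.2.1.2 p (List.mem_of_mem_tail hp)
    · intro p hp
      have hc : List.Chain' (· > ·) ((M+1) :: x.1.1.tail) :=
        (eq_cons_of_mem x.1.2.1 x.2 x.1.2.2.1) ▸ x.1.2.1.1
      have := (List.pairwise_cons.mp (List.isChain_iff_pairwise.mp hc)).1 p hp
      omega
    · have hs := congrArg List.sum (eq_cons_of_mem x.1.2.1 x.2 x.1.2.2.1)
      rw [x.1.2.2.2.1] at hs
      simp only [List.sum_cons] at hs
      omega
    · have hr := x.1.2.2.2.2
      rw [eq_cons_of_mem x.1.2.1 x.2 x.1.2.2.1, bgRank_cons, mod2_cast] at hr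
      omega
  invFun y := by
    refine ⟨⟨(M+1) :: y.1, ⟨?_, ?_⟩, ?_, ?_, ?_⟩, by simp⟩
    · apply List.isChain_cons.mpr
      refine ⟨fun b hb => ?_, y.2.1.1⟩
      have hmem : b ∈ y.1 := List.mem_of_mem_head? hb
      have := y.2.2.1 b hmem
      omega
    · intro p hp
      rcases List.mem_cons.mp hp with hq | hq
      · omega
      · exact y.2.1.2 p hq
    · intro p hp
      rcases List.mem_cons.mp hp with hq | hq
      · omega
      · have := y.2.2.1 p hq; omega
    · simp only [List.sum_cons, y.2.2.2.1]
      omega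
    · rw [bgRank_cons, mod2_cast, y.2.2.2.2]
      ring
  left_inv x := Subtype.ext (Subtype.ext (eq_cons_of_mem x.1.2.1 x.2 x.1.2.2.1).symm)
  right_inv y := Subtype.ext rfl

lemma cnt_succ (M : ℕ) (k : ℤ) (n : ℕ) (h : M + 1 ≤ n) :
    cnt (M+1) k n = cnt M k n + cnt M ((((M+1) % 2 : ℕ) : ℤ) - k) (n - (M+1)) := by
  classical
  calc cnt (M+1) k n
      = Nat.card ({x : bgS (M+1) k n // (M+1) ∈ x.1} ⊕ {x : bgS (M+1) k n // (M+1) ∉ x.1}) :=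
        (Nat.card_congr (Equiv.sumCompl _)).symm
    _ = Nat.card {x : bgS (M+1) k n // (M+1) ∈ x.1}
        + Nat.card {x : bgS (M+1) k n // (M+1) ∉ x.1} := Nat.card_sum
    _ = cnt M ((((M+1) % 2 : ℕ) : ℤ) - k) (n - (M+1)) + cnt M k n := by
        rw [Nat.card_congr (eqvMem M k n h), Nat.card_congr (eqvNotMem M k n)]; rfl
    _ = _ := by omega

lemma cnt_small (M : ℕ) (k : ℤ) (n : ℕ) (h : n < M + 1) : cnt (M+1) k n = cnt M k n := by
  apply Nat.card_congr
  apply Equiv.subtypeEquivRight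
  intro π
  constructor
  · rintro ⟨h1, h2, h3, h4⟩
    refine ⟨h1, fun p hp => ?_, h3, h4⟩
    have hle : p ≤ π.sum := List.single_le_sum (fun x _ => Nat.zero_le x) p hp
    omega
  · rintro ⟨h1, h2, h3, h4⟩
    exact ⟨h1, fun p hp => le_trans (h2 p hp) (by omega), h3, h4⟩

-- Section D: power series and main theorem
open PowerSeries in
noncomputable def FF (M : ℕ) (k : ℤ) : PowerSeries ℚ := PowerSeries.mk fun n => (cnt M k n : ℚ)

lemma FF_succ (M : ℕ) (k : ℤ) :
    FF (M+1) k = FF M k + PowerSeries.X ^ (M+1) * FF M ((((M+1) % 2 : ℕ) : ℤ) - k) := by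
  ext n
  rw [map_add]
  by_cases h : M + 1 ≤ n
  · obtain ⟨d, rfl⟩ : ∃ d, n = d + (M+1) := ⟨n - (M+1), by omega⟩
    rw [PowerSeries.coeff_X_pow_mul]
    simp only [FF, PowerSeries.coeff_mk]
    rw [cnt_succ M k (d + (M+1)) (by omega), show d + (M+1) - (M+1) = d from by omega]
    push_cast
    ring
  · have hn : n < M + 1 := by omega
    have hz : (PowerSeries.coeff n) (PowerSeries.X ^ (M+1) * FF M ((((M+1) % 2 : ℕ) : ℤ) - k)) = 0 := by
      rw [PowerSeries.coeff_X_pow_mul']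
      simp [h]
    rw [hz, add_zero]
    simp only [FF, PowerSeries.coeff_mk]
    rw [cnt_small M k n hn]

lemma gaussZ_of_nonneg {r : ℤ} (h : 0 ≤ r) (m : ℕ) : gaussZ m r = gaussPoly m r.toNat := if_pos h

lemma gaussZ_of_neg {r : ℤ} (h : r < 0) (m : ℕ) : gaussZ m r = 0 := if_neg (by omega)

lemma gaussZ_big {m : ℕ} {r : ℤ} (h : (m : ℤ) < r) : gaussZ m r = 0 := by
  rw [gaussZ_of_nonneg (by omega)]
  exact gauss_big _ _ (by omega)

lemma ek_nonneg (k : ℤ) : 0 ≤ 2 * k ^ 2 - k := by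
  rcases le_or_gt k 0 with h | h <;> nlinarith

open PowerSeries in
lemma stepE1 (N : ℕ) (k : ℤ) :
    (X : PowerSeries ℚ) ^ (2*k^2-k).toNat * Polynomial.aeval ((X : PowerSeries ℚ)^2) (gaussZ (2*N+1) (N + k))
    = X ^ (2*k^2-k).toNat * Polynomial.aeval ((X : PowerSeries ℚ)^2) (gaussZ (2*N) (N + k))
      + X ^ (2*N+1) * (X ^ (2*(1-k)^2-(1-k)).toNat * Polynomial.aeval ((X : PowerSeries ℚ)^2) (gaussZ (2*N) (N + (1-k)))) := by
  have hA := ek_nonneg k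
  have hB := ek_nonneg (1-k)
  have hrel : 2*(1-k)^2-(1-k) = (2*k^2-k) - 2*k + 1 := by ring
  rcases lt_trichotomy k (-(N : ℤ)) with hk | hk | hk
  · rw [gaussZ_of_neg (by omega), gaussZ_of_neg (by omega), gaussZ_big (by push_cast; omega)]
    simp
  · -- k = -N : N+k = 0
    rw [gaussZ_of_nonneg (by omega), gaussZ_of_nonneg (by omega),
        gaussZ_big (show ((2*N : ℕ) : ℤ) < N + (1-k) from by push_cast; omega)]
    rw [show (N + k).toNat = 0 from by omega]
    simp [gauss_zero_r]
  · rcases lt_trichotomy k ((N : ℤ) + 1) with hk2 | hk2 | hk2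
    · -- -N < k ≤ N : main case
      set s : ℕ := (N + k).toNat - 1 with hs_def
      have hs : ((s : ℕ) : ℤ) = N + k - 1 := by omega
      have hsle : s ≤ 2*N := by omega
      have h1 : (N + k).toNat = s + 1 := by omega
      have h2 : (N + (1-k)).toNat = 2*N - s := by omega
      rw [gaussZ_of_nonneg (by omega), gaussZ_of_nonneg (by omega), gaussZ_of_nonneg (by omega),
          h1, h2, pascal2 (2*N) s hsle, gauss_symm (2*N) s hsle]
      rw [map_add, map_mul, map_pow, Polynomial.aeval_X, mul_add]
      have h3 : (X : PowerSeries ℚ)^((2*k^2-k).toNat) * ((X^2)^(2*N-s))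
          = X^(2*N+1) * X^((2*(1-k)^2-(1-k)).toNat) := by
        rw [← pow_mul, ← pow_add, ← pow_add]
        congr 1
        omega
      linear_combination ((Polynomial.aeval ((X : PowerSeries ℚ)^2)) (gaussPoly (2*N) s)) * h3
    · -- k = N+1
      rw [gaussZ_big (show ((2*N : ℕ) : ℤ) < N + k from by push_cast; omega),
          gaussZ_of_nonneg (show (0:ℤ) ≤ N + k from by omega),
          gaussZ_of_nonneg (show (0:ℤ) ≤ N + (1-k) from by omega)]
      rw [show (N + k).toNat = 2*N+1 from by omega, show (N + (1-k)).toNat = 0 from by omega]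
      have he : 2*k^2 - k = 2*(N:ℤ)^2 + 3*N + 1 := by rw [hk2]; push_cast; ring
      rw [gauss_self, gauss_zero_r]
      simp only [map_one, map_zero, mul_one, mul_zero, zero_add, add_zero]
      rw [← pow_add]
      congr 1
      omega
    · -- k > N+1
      rw [gaussZ_big (by push_cast; omega), gaussZ_big (by push_cast; omega),
          gaussZ_of_neg (by omega)]
      simp

open PowerSeries in
lemma stepE2 (N : ℕ) (k : ℤ) :
    (X : PowerSeries ℚ) ^ (2*k^2-k).toNat * Polynomial.aeval ((X : PowerSeries ℚ)^2) (gaussZ (2*N+2) ((N+1) + k))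
    = X ^ (2*k^2-k).toNat * Polynomial.aeval ((X : PowerSeries ℚ)^2) (gaussZ (2*N+1) (N + k))
      + X ^ (2*N+2) * (X ^ (2*(-k)^2-(-k)).toNat * Polynomial.aeval ((X : PowerSeries ℚ)^2) (gaussZ (2*N+1) (N + (-k)))) := by
  have hA := ek_nonneg k
  have hB := ek_nonneg (-k)
  have hrel : 2*(-k)^2-(-k) = (2*k^2-k) + 2*k := by ring
  rcases lt_trichotomy k (-(N : ℤ) - 1) with hk | hk | hk
  · rw [gaussZ_of_neg (by omega), gaussZ_of_neg (by omega), gaussZ_big (by push_cast; omega)]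
    simp
  · -- k = -(N+1)
    rw [gaussZ_of_nonneg (by omega), gaussZ_of_neg (by omega),
        gaussZ_of_nonneg (show (0:ℤ) ≤ N + (-k) from by omega)]
    rw [show ((N:ℤ)+1+k).toNat = 0 from by omega, show ((N:ℤ) + (-k)).toNat = 2*N+1 from by omega]
    have he : 2*k^2 - k = 2*(N:ℤ)^2 + 5*N + 3 := by rw [show k = -(N:ℤ)-1 from hk]; push_cast; ring
    rw [gauss_self, gauss_zero_r]
    simp only [map_one, map_zero, mul_one, mul_zero, zero_add, add_zero]
    rw [← pow_add]
    congr 1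
    omega
  · rcases lt_trichotomy k ((N : ℤ) + 1) with hk2 | hk2 | hk2
    · -- -N ≤ k ≤ N
      set r : ℕ := (N + k).toNat with hr_def
      have hr : ((r : ℕ) : ℤ) = N + k := by omega
      have hrle : r + 1 ≤ 2*N+1 := by omega
      have h1 : ((N:ℤ)+1+k).toNat = r + 1 := by omega
      have h2 : ((N:ℤ) + (-k)).toNat = 2*N+1 - (r+1) := by omega
      rw [gaussZ_of_nonneg (by omega), gaussZ_of_nonneg (by omega), gaussZ_of_nonneg (by omega),
          h1, h2, gauss_symm (2*N+1) (r+1) hrle]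
      rw [show gaussPoly (2*N+2) (r+1) = gaussPoly (2*N+1) r + Polynomial.X ^ (r+1) * gaussPoly (2*N+1) (r+1) from rfl]
      rw [map_add, map_mul, map_pow, Polynomial.aeval_X, mul_add]
      have h3 : (X : PowerSeries ℚ)^((2*k^2-k).toNat) * ((X^2)^(r+1))
          = X^(2*N+2) * X^((2*(-k)^2-(-k)).toNat) := by
        rw [← pow_mul, ← pow_add, ← pow_add]
        congr 1
        omega
      linear_combination ((Polynomial.aeval ((X : PowerSeries ℚ)^2)) (gaussPoly (2*N+1) (r+1))) * h3
    · -- k = N+1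
      rw [gaussZ_of_nonneg (by omega), gaussZ_of_nonneg (by omega), gaussZ_of_neg (by omega)]
      rw [show ((N:ℤ)+1+k).toNat = 2*N+2 from by omega, show ((N:ℤ)+k).toNat = 2*N+1 from by omega]
      rw [gauss_self, gauss_self]
      simp
    · rw [gaussZ_big (by push_cast; omega), gaussZ_big (by push_cast; omega),
          gaussZ_of_neg (by omega)]
      simp

open PowerSeries in
lemma FF_zero (k : ℤ) : FF 0 k =
    (X : PowerSeries ℚ) ^ (2*k^2-k).toNat * Polynomial.aeval ((X : PowerSeries ℚ)^2) (gaussZ 0 ((0:ℤ) + k)) := by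
  by_cases hk : k = 0
  · subst hk
    rw [show ((0:ℤ) + 0) = 0 from rfl, gaussZ_of_nonneg le_rfl]
    simp only [Int.toNat_zero, gauss_zero_r, pow_zero, map_one, mul_one]
    norm_num
    ext n
    simp only [FF, PowerSeries.coeff_mk, cnt_zero]
    rw [PowerSeries.coeff_one]
    by_cases hn : n = 0 <;> simp [hn]
  · have hz : gaussZ 0 ((0:ℤ) + k) = 0 := by
      rcases lt_trichotomy k 0 with h | h | h
      · exact gaussZ_of_neg (by omega) 0
      · exact absurd h hk
      · exact gaussZ_big (by push_cast; omega)
    rw [hz, map_zero, mul_zero]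
    ext n
    simp only [FF, PowerSeries.coeff_mk, cnt_zero]
    rw [if_neg (by tauto)]
    simp

open PowerSeries in
lemma main_thm : ∀ (M : ℕ) (k : ℤ), FF M k =
    (X : PowerSeries ℚ) ^ (2*k^2-k).toNat
      * Polynomial.aeval ((X : PowerSeries ℚ)^2) (gaussZ M (((M / 2 : ℕ) : ℤ) + k)) := by
  intro M
  induction M with
  | zero =>
    intro k
    simpa using FF_zero k
  | succ M ih =>
    intro k
    rcases Nat.even_or_odd M with ⟨N, hN⟩ | ⟨N, hN⟩
    · -- M = 2N, M+1 = 2N+1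
      have hM : M = 2*N := by omega
      subst hM
      have hc : (((2*N+1) % 2 : ℕ) : ℤ) - k = 1 - k := by
        rw [show (2*N+1) % 2 = 1 from by omega]
        push_cast; ring
      rw [FF_succ, hc, ih k, ih (1-k)]
      rw [show (2*N) / 2 = N from by omega, show (2*N+1) / 2 = N from by omega]
      exact (stepE1 N k).symm
    · -- M = 2N+1, M+1 = 2N+2
      have hM : M = 2*N+1 := by omega
      subst hM
      have hc : (((2*N+1+1) % 2 : ℕ) : ℤ) - k = -k := by
        rw [show (2*N+1+1) % 2 = 0 from by omega]
        push_cast; ring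
      rw [FF_succ, hc, ih k, ih (-k)]
      rw [show (2*N+1) / 2 = N from by omega, show (2*N+1+1) / 2 = N+1 from by omega]
      have := stepE2 N k
      rw [show (2*N+2) = 2*N+1+1 from rfl] at this
      rw [show ((N:ℤ)+1+k) = (((N+1 : ℕ) : ℤ) + k) from by push_cast; ring] at this
      exact this.symm


theorem stmt8 (N ν : ℕ) (hν : ν ≤ 1) (k : ℤ) :
    PowerSeries.mk (fun n =>
      (Nat.card {π : List ℕ // IsDistinctPartition π ∧ (∀ p ∈ π, p ≤ 2 * N + ν) ∧
        π.sum = n ∧ bgRank π = k} : ℚ)) =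
    PowerSeries.X ^ (2 * k ^ 2 - k).toNat *
      Polynomial.aeval (PowerSeries.X ^ 2 : PowerSeries ℚ)
        (gaussZ (2 * N + ν) ((N : ℤ) + k)) := by
  have h := main_thm (2*N+ν) k
  rw [show (2*N+ν)/2 = N from by omega] at h
  exact h
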